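/- For an algebra map f : F → k, let f(x) = Σ_{n≥1} f(u_n) x^n/n! be the associated exponential formal power series with zero constant term. Then for all algebra maps f, g : F → k, the composite series satisfies f(g(x)) = (g⋆f)(x), where ⋆ is the convolution product (f⋆g)(u_n) = Σ f(u_n⟨1⟩) g(u_n⟨2⟩) with δ u_n = Σ u_n⟨1⟩ ⊗ u_n⟨2⟩; equivalently, for every n ≥ 1 the coefficient of x^n/n! in f(g(x)) equals Σ_{π∈Π_n} (∏_{B∈π} g(u_{|B|})) f(u_{ℓ(π)}). Hence the monoid of algebra maps F → k under convolution is antiisomorphic to the monoid of exponential formal power series with zero constant term under composition. -/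

import Mathlib

open scoped TensorProduct

noncomputable section

/-- Each block of a finite partition is nonempty. -/
lemma partCardPos {n : ℕ} (P : Finpartition (Finset.univ : Finset (Fin n)))
    {b : Finset (Fin n)} (hb : b ∈ P.parts) : 0 < b.card :=
  Finset.card_pos.mpr (P.nonempty_of_mem_parts hb)

/-- A partition of a nonempty set has at least one block. -/
lemma partsCardPos {n : ℕ} (hn : 0 < n)
    (P : Finpartition (Finset.univ : Finset (Fin n))) : 0 < P.parts.card := by
  refine Finset.card_pos.mpr (P.parts_nonempty ?_)
  have h : (Finset.univ : Finset (Fin n)).Nonempty := ⟨⟨0, hn⟩, Finset.mem_univ _⟩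
  simpa [Finset.bot_eq_empty, ← Finset.nonempty_iff_ne_empty] using h

/-- The Faà di Bruno bialgebra `F = k[u_1, u_2, …]` (as an algebra). -/
abbrev FaaF (k : Type*) [Field k] : Type _ := MvPolynomial ℕ+ k

/-- The Faà di Bruno coproduct: the algebra map with
`δ u_n = Σ_{π ∈ Π_n} u_π ⊗ u_{ℓ(π)}`. -/
def deltaF (k : Type*) [Field k] : FaaF k →ₐ[k] FaaF k ⊗[k] FaaF k :=
  MvPolynomial.aeval (fun n : ℕ+ =>
    ∑ P : Finpartition (Finset.univ : Finset (Fin (n : ℕ))),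
      (∏ b ∈ P.parts.attach,
        (MvPolynomial.X (⟨b.1.card, partCardPos P b.2⟩ : ℕ+) : FaaF k)) ⊗ₜ[k]
      (MvPolynomial.X (⟨P.parts.card, partsCardPos n.2 P⟩ : ℕ+) : FaaF k))

/-- The Faà di Bruno counit `ε(u_n) = δ_{n,1}`. -/
def epsF (k : Type*) [Field k] : FaaF k →ₐ[k] k :=
  MvPolynomial.aeval (fun n : ℕ+ => if (n : ℕ) = 1 then (1 : k) else 0)

/-- The exponential formal power series `f(x) = Σ_{n ≥ 1} f(u_n) x^n/n!` associated to an
algebra map `f : F → k`. -/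
def serF {k : Type*} [Field k] (f : FaaF k →ₐ[k] k) : PowerSeries k :=
  PowerSeries.mk fun n => if h : 0 < n then f (MvPolynomial.X ⟨n, h⟩) / n.factorial else 0

/-- Substitution `f(g(x))` of a power series `g` with zero constant term into `f`:
the coefficient of `x^m` is `Σ_{j ≤ m} (coeff_j f)·(coeff_m g^j)`. -/
def compPS {k : Type*} [Field k] (f g : PowerSeries k) : PowerSeries k :=
  PowerSeries.mk fun m =>
    ∑ j ∈ Finset.range (m + 1), PowerSeries.coeff j f * PowerSeries.coeff m (g ^ j)

/-- The convolution product `(f ⋆ g)(p) = Σ f(p⟨1⟩) g(p⟨2⟩)` on maps `F → k`. -/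
def convF {k : Type*} [Field k] (f g : FaaF k →ₐ[k] k) : FaaF k →ₗ[k] k :=
  (TensorProduct.lid k k).toLinearMap ∘ₗ
    TensorProduct.map f.toLinearMap g.toLinearMap ∘ₗ (deltaF k).toLinearMap

section AuxFaa

open Finset

variable {α β : Type*} [DecidableEq α] [DecidableEq β]

/-- Map a finpartition of a finset along a function injective on it. -/
def Finpartition.mapGround {s : Finset α} (f : α → β) (hf : Set.InjOn f s)
    (P : Finpartition s) : Finpartition (s.image f) where
  parts := P.parts.image (Finset.image f)
  supIndep := by
    rw [Finset.supIndep_iff_pairwiseDisjoint]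
    intro x hx y hy hxy
    simp only [coe_image, Set.mem_image, mem_coe] at hx hy
    obtain ⟨B, hB, rfl⟩ := hx
    obtain ⟨C, hC, rfl⟩ := hy
    have hBC : B ≠ C := fun h => hxy (by rw [h])
    have hd : Disjoint B C := P.disjoint hB hC hBC
    simp only [Function.onFun, id_eq]
    rw [Finset.disjoint_left]
    rintro z hz hz'
    simp only [Finset.mem_image] at hz hz'
    obtain ⟨b, hb, rfl⟩ := hz
    obtain ⟨c, hc, hcb⟩ := hz'
    have hbs : b ∈ s := P.le hB hb
    have hcs : c ∈ s := P.le hC hc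
    have : c = b := hf hcs hbs hcb
    subst this
    exact (Finset.disjoint_left.1 hd hb) hc
  sup_parts := by
    ext y
    simp only [Finset.mem_sup, Finset.mem_image, id_eq]
    constructor
    · rintro ⟨-, ⟨B, hB, rfl⟩, hy⟩
      obtain ⟨x, hx, rfl⟩ := Finset.mem_image.1 hy
      exact ⟨x, P.le hB hx, rfl⟩
    · rintro ⟨x, hx, rfl⟩
      obtain ⟨B, hB, hxB⟩ := P.exists_mem hx
      exact ⟨B.image f, ⟨B, hB, rfl⟩, Finset.mem_image_of_mem f hxB⟩
  bot_notMem := by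
    simp only [Finset.bot_eq_empty, Finset.mem_image]
    rintro ⟨B, hB, hBe⟩
    exact P.bot_notMem (by simpa [Finset.image_eq_empty.1 hBe] using hB)

@[simp] lemma Finpartition.parts_mapGround {s : Finset α} (f : α → β) (hf : Set.InjOn f s)
    (P : Finpartition s) : (P.mapGround f hf).parts = P.parts.image (Finset.image f) := rfl

lemma image_injOn_parts {s : Finset α} (f : α → β) (hf : Set.InjOn f s)
    (P : Finpartition s) : Set.InjOn (Finset.image f) P.parts := by
  intro B hB C hC h
  have hBs : ↑B ⊆ (s : Set α) := P.le (Finset.mem_coe.1 hB)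
  have hCs : ↑C ⊆ (s : Set α) := P.le (Finset.mem_coe.1 hC)
  ext x
  constructor
  · intro hx
    have : f x ∈ C.image f := h ▸ Finset.mem_image_of_mem f hx
    obtain ⟨y, hy, hyx⟩ := Finset.mem_image.1 this
    rwa [← hf (hCs hy) (hBs hx) hyx]
  · intro hx
    have : f x ∈ B.image f := h.symm ▸ Finset.mem_image_of_mem f hx
    obtain ⟨y, hy, hyx⟩ := Finset.mem_image.1 this
    rwa [← hf (hBs hy) (hCs hx) hyx]

variable {k : Type*} [Field k]

/-- The partition-weighted sum. -/
def Rsum (b a : ℕ → k) (s : Finset α) : k :=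
  ∑ P : Finpartition s, (∏ B ∈ P.parts, b B.card) * a P.parts.card

lemma Rsum_empty (b a : ℕ → k) : Rsum b a (∅ : Finset α) = a 0 := by
  rw [Rsum]
  have : ∀ P : Finpartition (∅ : Finset α), P.parts = ∅ := fun P =>
    Finpartition.parts_eq_empty_iff.2 rfl
  have hu : (Finset.univ : Finset (Finpartition (∅ : Finset α))) = {(⊥ : Finpartition (∅ : Finset α))} := by
    apply Finset.eq_singleton_iff_unique_mem.2
    refine ⟨Finset.mem_univ _, fun P _ => ?_⟩
    apply Finpartition.ext
    rw [this P, this ⊥]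
  rw [hu, Finset.sum_singleton, this ⊥]
  simp
lemma Finpartition.card_parts_mapGround {s : Finset α} (f : α → β) (hf : Set.InjOn f s)
    (P : Finpartition s) : (P.mapGround f hf).parts.card = P.parts.card :=
  Finset.card_image_of_injOn (image_injOn_parts f hf P)

lemma Finpartition.prod_parts_mapGround {s : Finset α} (f : α → β) (hf : Set.InjOn f s)
    (P : Finpartition s) (b : ℕ → k) :
    ∏ B ∈ (P.mapGround f hf).parts, b B.card = ∏ B ∈ P.parts, b B.card := by
  rw [parts_mapGround, Finset.prod_image (image_injOn_parts f hf P)]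
  refine Finset.prod_congr rfl fun B hB => ?_
  rw [Finset.card_image_of_injOn (hf.mono (fun x hx => P.le hB hx))]

lemma Rsum_eq_of_card_eq {s : Finset α} {t : Finset β} (h : s.card = t.card) (b a : ℕ → k) :
    Rsum b a s = Rsum b a t := by
  rcases Finset.eq_empty_or_nonempty s with rfl | hs
  · have ht : t = ∅ := Finset.card_eq_zero.1 (h.symm.trans Finset.card_empty)
    subst ht; rw [Rsum_empty, Rsum_empty]
  obtain ⟨y0, hy0⟩ : t.Nonempty := Finset.card_pos.1 (h ▸ Finset.card_pos.2 hs)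
  obtain ⟨x0, hx0⟩ := hs
  set e := Finset.equivOfCardEq h with he
  set f : α → β := fun x => if hx : x ∈ s then (e ⟨x, hx⟩ : β) else y0 with hfdef
  set g : β → α := fun y => if hy : y ∈ t then (e.symm ⟨y, hy⟩ : α) else x0 with hgdef
  have hfs : ∀ x (hx : x ∈ s), f x = (e ⟨x, hx⟩ : β) := fun x hx => by simp [hfdef, hx]
  have hgt : ∀ y (hy : y ∈ t), g y = (e.symm ⟨y, hy⟩ : α) := fun y hy => by simp [hgdef, hy]
  have hft : ∀ x ∈ s, f x ∈ t := fun x hx => by rw [hfs x hx]; exact (e ⟨x, hx⟩).2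
  have hgs : ∀ y ∈ t, g y ∈ s := fun y hy => by rw [hgt y hy]; exact (e.symm ⟨y, hy⟩).2
  have hgf : ∀ x ∈ s, g (f x) = x := by
    intro x hx
    rw [hfs x hx, hgt _ ((e ⟨x, hx⟩).2)]
    have : (⟨(e ⟨x, hx⟩ : β), (e ⟨x, hx⟩).2⟩ : {y // y ∈ t}) = e ⟨x, hx⟩ := rfl
    rw [this, Equiv.symm_apply_apply]
  have hfg : ∀ y ∈ t, f (g y) = y := by
    intro y hy
    rw [hgt y hy, hfs _ ((e.symm ⟨y, hy⟩).2)]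
    have : (⟨(e.symm ⟨y, hy⟩ : α), (e.symm ⟨y, hy⟩).2⟩ : {x // x ∈ s}) = e.symm ⟨y, hy⟩ := rfl
    rw [this, Equiv.apply_symm_apply]
  have hfinj : Set.InjOn f s := fun x hx y hy hxy => by
    rw [← hgf x hx, ← hgf y hy, hxy]
  have hginj : Set.InjOn g t := fun x hx y hy hxy => by
    rw [← hfg x hx, ← hfg y hy, hxy]
  have himg : s.image f = t := by
    apply Finset.Subset.antisymm
    · intro y hy; obtain ⟨x, hx, rfl⟩ := Finset.mem_image.1 hy; exact hft x hx
    · intro y hy; exact Finset.mem_image.2 ⟨g y, hgs y hy, hfg y hy⟩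
  have himg' : t.image g = s := by
    apply Finset.Subset.antisymm
    · intro x hx; obtain ⟨y, hy, rfl⟩ := Finset.mem_image.1 hx; exact hgs y hy
    · intro x hx; exact Finset.mem_image.2 ⟨f x, hft x hx, hgf x hx⟩
  rw [Rsum, Rsum]
  refine Finset.sum_nbij' (fun P => (P.mapGround f hfinj).copy himg)
    (fun Q => (Q.mapGround g hginj).copy himg') (fun _ _ => Finset.mem_univ _)
    (fun _ _ => Finset.mem_univ _) ?_ ?_ ?_
  · intro P _
    apply Finpartition.ext
    simp only [Finpartition.copy_parts, Finpartition.parts_mapGround, Finset.image_image]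
    refine Eq.trans (Finset.image_congr ?_) Finset.image_id
    intro B hB
    simp only [Function.comp_apply, Finset.image_image, id_eq]
    refine Eq.trans (Finset.image_congr ?_) Finset.image_id
    intro x hx
    exact hgf x (P.le hB hx)
  · intro Q _
    apply Finpartition.ext
    simp only [Finpartition.copy_parts, Finpartition.parts_mapGround, Finset.image_image]
    refine Eq.trans (Finset.image_congr ?_) Finset.image_id
    intro B hB
    simp only [Function.comp_apply, Finset.image_image, id_eq]
    refine Eq.trans (Finset.image_congr ?_) Finset.image_id
    intro y hy
    exact hfg y (Q.le hB hy)
  · intro P _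
    have h1 : ((P.mapGround f hfinj).copy himg).parts = (P.mapGround f hfinj).parts :=
      Finpartition.copy_parts _ _
    rw [h1, Finpartition.prod_parts_mapGround, Finpartition.card_parts_mapGround]
lemma Finpartition.parts_avoid_of_mem {s : Finset α} (P : Finpartition s) {B : Finset α}
    (hB : B ∈ P.parts) : (P.avoid B).parts = P.parts.erase B := by
  ext c
  rw [Finpartition.mem_avoid, Finset.mem_erase]
  constructor
  · rintro ⟨d, hd, hdB, rfl⟩
    have hdB' : d ≠ B := fun h => hdB (h ▸ le_refl _)
    have : Disjoint d B := P.disjoint hd hB hdB'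
    rw [Finset.sdiff_eq_self_of_disjoint this]
    exact ⟨hdB', hd⟩
  · rintro ⟨hcB, hc⟩
    have : Disjoint c B := P.disjoint hc hB hcB
    refine ⟨c, hc, ?_, Finset.sdiff_eq_self_of_disjoint this⟩
    intro hle
    obtain ⟨y, hy⟩ := P.nonempty_of_mem_parts hc
    exact Finset.disjoint_left.1 this hy (hle hy)

lemma Rsum_insert (b a : ℕ → k) {s : Finset α} {x : α} (hx : x ∉ s) :
    Rsum b a (insert x s) =
      ∑ t ∈ s.powerset, b (t.card + 1) * Rsum b (fun j => a (j + 1)) (s \ t) := by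
  classical
  have hmaps : ∀ P : Finpartition (insert x s), P.part x \ {x} ∈ s.powerset := by
    intro P
    rw [Finset.mem_powerset]
    intro y hy
    rw [Finset.mem_sdiff, Finset.mem_singleton] at hy
    have := P.le (P.part_mem.2 (Finset.mem_insert_self x s)) hy.1
    rcases Finset.mem_insert.1 this with h | h
    · exact absurd h hy.2
    · exact h
  rw [Rsum, ← Finset.sum_fiberwise_of_maps_to (g := fun P : Finpartition (insert x s) => P.part x \ {x})
    (fun P _ => hmaps P) _]
  refine Finset.sum_congr rfl fun t ht => ?_
  rw [Finset.mem_powerset] at ht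
  have hxt : x ∉ t := fun h => hx (ht h)
  -- ground set facts
  have hground : insert x s \ insert x t = s \ t := by
    ext y
    simp only [Finset.mem_sdiff, Finset.mem_insert, not_or]
    constructor
    · rintro ⟨h1 | h1, h2, h3⟩
      · exact absurd h1 h2
      · exact ⟨h1, h3⟩
    · rintro ⟨h1, h2⟩
      exact ⟨Or.inr h1, fun h => hx (h ▸ h1), h2⟩
  have hbne : (insert x t : Finset α) ≠ ⊥ := by
    simp [Finset.bot_eq_empty, Finset.insert_ne_empty]
  have hdisj : Disjoint (s \ t) (insert x t) := by
    rw [Finset.disjoint_insert_right]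
    exact ⟨fun h => hx (Finset.mem_sdiff.1 h).1, Finset.disjoint_sdiff.symm⟩
  have hsup : (s \ t) ⊔ (insert x t) = insert x s := by
    rw [Finset.sup_eq_union]
    ext y
    simp only [Finset.mem_union, Finset.mem_sdiff, Finset.mem_insert]
    constructor
    · rintro (⟨h1, _⟩ | h1 | h1)
      · exact Or.inr h1
      · exact Or.inl h1
      · exact Or.inr (ht h1)
    · rintro (rfl | h1)
      · exact Or.inr (Or.inl rfl)
      · by_cases hyt : y ∈ t
        · exact Or.inr (Or.inr hyt)
        · exact Or.inl ⟨h1, hyt⟩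
  rw [Rsum, Finset.mul_sum]
  refine Finset.sum_nbij' (fun P => (P.avoid (insert x t)).copy hground)
    (fun Q => Q.extend hbne hdisj hsup) (fun _ _ => Finset.mem_univ _) ?_ ?_ ?_ ?_
  · -- j maps into fiber
    intro Q _
    rw [Finset.mem_filter]
    refine ⟨Finset.mem_univ _, ?_⟩
    have hmem : insert x t ∈ (Q.extend hbne hdisj hsup).parts := by
      rw [Finpartition.extend]
      exact Finset.mem_insert_self _ _
    rw [Finpartition.part_eq_of_mem _ hmem (Finset.mem_insert_self x t)]
    rw [← Finset.erase_eq, Finset.erase_insert hxt]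
  · -- left inverse
    intro P hP
    rw [Finset.mem_filter] at hP
    have hpart : P.part x = insert x t := by
      rw [← hP.2, ← Finset.erase_eq, Finset.insert_erase (P.mem_part (Finset.mem_insert_self x s))]
    apply Finpartition.ext
    have hPm : insert x t ∈ P.parts := hpart ▸ P.part_mem.2 (Finset.mem_insert_self x s)
    show insert (insert x t) ((P.avoid (insert x t)).copy hground).parts = P.parts
    rw [Finpartition.copy_parts, Finpartition.parts_avoid_of_mem P hPm,
      Finset.insert_erase hPm]
  · -- right inverse
    intro Q _
    apply Finpartition.ext
    have hnm : insert x t ∉ Q.parts := by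
      intro h
      have := Q.le h (Finset.mem_insert_self x t)
      exact hx (Finset.mem_sdiff.1 this).1
    have hmem : insert x t ∈ (Q.extend hbne hdisj hsup).parts := Finset.mem_insert_self _ _
    rw [Finpartition.copy_parts, Finpartition.parts_avoid_of_mem _ hmem]
    show (insert (insert x t) Q.parts).erase (insert x t) = Q.parts
    rw [Finset.erase_insert hnm]
  · -- weights
    intro P hP
    rw [Finset.mem_filter] at hP
    have hpart : P.part x = insert x t := by
      rw [← hP.2, ← Finset.erase_eq, Finset.insert_erase (P.mem_part (Finset.mem_insert_self x s))]
    have hPm : insert x t ∈ P.parts := hpart ▸ P.part_mem.2 (Finset.mem_insert_self x s)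
    rw [Finpartition.copy_parts, Finpartition.parts_avoid_of_mem P hPm]
    rw [← Finset.mul_prod_erase _ _ hPm, Finset.card_insert_of_notMem hxt]
    rw [← Finset.card_erase_add_one hPm]
    ring
-- ## Specialization to `Fin n`

/-- `Rsum` on a canonical ground set of size `n`. -/
def rW (b a : ℕ → k) (n : ℕ) : k := Rsum b a (Finset.univ : Finset (Fin n))

lemma rW_zero (b a : ℕ → k) : rW b a 0 = a 0 := by
  rw [rW, Finset.univ_eq_empty, Rsum_empty]

lemma rW_succ (b a : ℕ → k) (n : ℕ) :
    rW b a (n + 1) =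
      ∑ m ∈ Finset.range (n + 1),
        (n.choose m : k) * b (m + 1) * rW b (fun j => a (j + 1)) (n - m) := by
  set x : Fin (n + 1) := Fin.last n
  set s : Finset (Fin (n + 1)) := Finset.univ.erase x with hs
  have hins : insert x s = Finset.univ := Finset.insert_erase (Finset.mem_univ x)
  have hxs : x ∉ s := Finset.notMem_erase x _
  have hscard : s.card = n := by
    rw [hs, Finset.card_erase_of_mem (Finset.mem_univ x), Finset.card_univ, Fintype.card_fin]
    omega
  rw [rW, ← hins, Rsum_insert b a hxs]
  have hstep : ∀ t ∈ s.powerset,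
      b (t.card + 1) * Rsum b (fun j => a (j + 1)) (s \ t) =
      b (t.card + 1) * rW b (fun j => a (j + 1)) (n - t.card) := by
    intro t ht
    rw [Finset.mem_powerset] at ht
    congr 1
    rw [rW]
    refine Rsum_eq_of_card_eq ?_ _ _
    rw [Finset.card_sdiff_of_subset ht, Finset.card_univ, Fintype.card_fin, hscard]
  rw [Finset.sum_congr rfl hstep]
  rw [Finset.sum_powerset_apply_card (f := fun m => b (m + 1) * rW b (fun j => a (j + 1)) (n - m))]
  rw [hscard]
  refine Finset.sum_congr rfl fun m _ => ?_
  rw [nsmul_eq_mul, mul_assoc]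

-- ## The analytic side

open PowerSeries

variable (G : PowerSeries k)

/-- Exponential coefficients of `G`. -/
def bW (G : PowerSeries k) (m : ℕ) : k := (m.factorial : k) * PowerSeries.coeff m G

/-- `n! ·` the `n`-th coefficient of `Σ_j a_j/j! G^j` (truncated). -/
def Lsum (G : PowerSeries k) (a : ℕ → k) (n : ℕ) : k :=
  (n.factorial : k) *
    ∑ j ∈ Finset.range (n + 1), a j / (j.factorial : k) * PowerSeries.coeff n (G ^ j)

lemma coeff_pow_eq_zero {G : PowerSeries k} (hG : PowerSeries.constantCoeff G = 0)
    {n j : ℕ} (h : n < j) : PowerSeries.coeff n (G ^ j) = 0 := by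
  obtain ⟨H, hH⟩ : (PowerSeries.X : PowerSeries k) ^ j ∣ G ^ j :=
    pow_dvd_pow_of_dvd (PowerSeries.X_dvd_iff.2 hG) j
  rw [hH, PowerSeries.coeff_mul]
  refine Finset.sum_eq_zero fun p hp => ?_
  rw [PowerSeries.coeff_X_pow, if_neg, zero_mul]
  have := Finset.HasAntidiagonal.antidiagonal.fst_le hp
  omega

lemma Lsum_zero (a : ℕ → k) : Lsum G a 0 = a 0 := by
  simp [Lsum, PowerSeries.coeff_zero_eq_constantCoeff]

lemma Lsum_eq_sum_range {G : PowerSeries k} (hG : PowerSeries.constantCoeff G = 0)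
    (c : ℕ → k) {m N : ℕ} (h : m ≤ N) :
    Lsum G c m = (m.factorial : k) *
      ∑ j ∈ Finset.range (N + 1), c j / (j.factorial : k) * PowerSeries.coeff m (G ^ j) := by
  rw [Lsum]
  congr 1
  refine Finset.sum_subset (by intro j hj; simp only [Finset.mem_range] at *; omega) ?_
  intro j hj hj'
  simp only [Finset.mem_range] at hj hj'
  rw [coeff_pow_eq_zero hG (by omega), mul_zero]

/-- The derivative identity for coefficients of powers. -/
lemma coeff_pow_succ {G : PowerSeries k} (j n : ℕ) :
    ((n : k) + 1) * PowerSeries.coeff (n + 1) (G ^ (j + 1)) =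
      ((j : k) + 1) * ∑ p ∈ Finset.range (n + 1),
        (((p : k) + 1) * PowerSeries.coeff (p + 1) G) *
          PowerSeries.coeff (n - p) (G ^ j) := by
  have h1 : PowerSeries.coeff n (PowerSeries.derivative k (G ^ (j + 1))) =
      PowerSeries.coeff (n + 1) (G ^ (j + 1)) * (n + 1) := PowerSeries.coeff_derivative _ _
  have h2 : PowerSeries.derivative k (G ^ (j + 1)) =
      (j + 1) • ((PowerSeries.derivative k G) * G ^ j) := by
    rw [Derivation.leibniz_pow]
    simp only [Nat.add_sub_cancel, smul_eq_mul]
    ring_nf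
  rw [h2] at h1
  rw [map_nsmul] at h1
  have h3 : PowerSeries.coeff n ((PowerSeries.derivative k G) * G ^ j) =
      ∑ p ∈ Finset.range (n + 1),
        (((p : k) + 1) * PowerSeries.coeff (p + 1) G) * PowerSeries.coeff (n - p) (G ^ j) := by
    rw [PowerSeries.coeff_mul, Finset.Nat.sum_antidiagonal_eq_sum_range_succ_mk]
    refine Finset.sum_congr rfl fun p _ => ?_
    rw [PowerSeries.coeff_derivative]
    push_cast
    ring
  rw [h3, nsmul_eq_mul] at h1
  push_cast at h1 ⊢
  linear_combination -h1
lemma Lsum_succ [CharZero k] {G : PowerSeries k} (hG : PowerSeries.constantCoeff G = 0)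
    (a : ℕ → k) (n : ℕ) :
    Lsum G a (n + 1) = ∑ m ∈ Finset.range (n + 1),
      (n.choose m : k) * bW G (m + 1) * Lsum G (fun i => a (i + 1)) (n - m) := by
  have hn1 : ((n : k) + 1) ≠ 0 := Nat.cast_add_one_ne_zero n
  apply mul_left_cancel₀ hn1
  rw [Lsum, Finset.sum_range_succ']
  have h0 : a 0 / ((Nat.factorial 0 : ℕ) : k) * PowerSeries.coeff (n + 1) (G ^ 0) = 0 := by
    simp [PowerSeries.coeff_one]
  rw [h0, add_zero, Finset.mul_sum, Finset.mul_sum, Finset.mul_sum]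
  -- LHS: Σ_j (n+1) * ((n+1)! * (a(j+1)/(j+1)! * coeff_{n+1}(G^{j+1})))
  have hL : ∀ j ∈ Finset.range (n + 1),
      ((n : k) + 1) * (((n + 1).factorial : k) *
        (a (j + 1) / (((j + 1).factorial : ℕ) : k) * PowerSeries.coeff (n + 1) (G ^ (j + 1)))) =
      ∑ p ∈ Finset.range (n + 1),
        ((n + 1).factorial : k) * (a (j + 1) / (((j + 1).factorial : ℕ) : k)) * (((j : k) + 1) *
          ((((p : k) + 1) * PowerSeries.coeff (p + 1) G) *
            PowerSeries.coeff (n - p) (G ^ j))) := by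
    intro j _
    rw [show ((n : k) + 1) * (((n + 1).factorial : k) *
        (a (j + 1) / (((j + 1).factorial : ℕ) : k) * PowerSeries.coeff (n + 1) (G ^ (j + 1)))) =
        ((n + 1).factorial : k) * (a (j + 1) / (((j + 1).factorial : ℕ) : k)) *
          (((n : k) + 1) * PowerSeries.coeff (n + 1) (G ^ (j + 1))) from by ring,
      coeff_pow_succ, Finset.mul_sum, Finset.mul_sum]
  rw [Finset.sum_congr rfl hL, Finset.sum_comm]
  refine Finset.sum_congr rfl fun p hp => ?_
  have hpn : p ≤ n := Nat.lt_succ_iff.1 (Finset.mem_range.1 hp)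
  rw [Lsum_eq_sum_range hG _ (Nat.sub_le n p), Finset.mul_sum, Finset.mul_sum, Finset.mul_sum]
  refine Finset.sum_congr rfl fun j _ => ?_
  have h1 : (((n + 1).factorial : ℕ) : k) =
      ((n : k) + 1) * (n.choose p : k) * ((p.factorial : ℕ) : k) * (((n - p).factorial : ℕ) : k) := by
    rw [Nat.factorial_succ, ← Nat.choose_mul_factorial_mul_factorial hpn]
    push_cast
    ring
  have h2 : (((j + 1).factorial : ℕ) : k) = ((j : k) + 1) * ((j.factorial : ℕ) : k) := by
    rw [Nat.factorial_succ]; push_cast; ring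
  have h3 : (((p + 1).factorial : ℕ) : k) = ((p : k) + 1) * ((p.factorial : ℕ) : k) := by
    rw [Nat.factorial_succ]; push_cast; ring
  have hj0 : ((j.factorial : ℕ) : k) ≠ 0 := Nat.cast_ne_zero.2 j.factorial_ne_zero
  have hj1 : ((j : k) + 1) ≠ 0 := Nat.cast_add_one_ne_zero j
  rw [bW, h1, h2, h3]
  field_simp

lemma Lsum_eq_rW [CharZero k] {G : PowerSeries k} (hG : PowerSeries.constantCoeff G = 0)
    (a : ℕ → k) (n : ℕ) : Lsum G a n = rW (bW G) a n := by
  induction n using Nat.strong_induction_on generalizing a with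
  | _ n ih =>
    match n with
    | 0 => rw [Lsum_zero, rW_zero]
    | n + 1 =>
      rw [Lsum_succ hG, rW_succ]
      refine Finset.sum_congr rfl fun m hm => ?_
      rw [ih (n - m) (by omega)]

end AuxFaa

/-- For all algebra maps `f, g : F → k`, the composite exponential series satisfies
`f(g(x)) = (g ⋆ f)(x)`; equivalently, for every `n ≥ 1`, the coefficient of `x^n/n!` in
`f(g(x))` is `Σ_{π ∈ Π_n} (Π_{B ∈ π} g(u_{|B|})) f(u_{ℓ(π)})`.  Hence the monoid of
algebra maps `F → k` under convolution is antiisomorphic to the monoid of exponential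
formal power series with zero constant term under composition. -/

theorem faa_di_bruno_series_composition
    {k : Type*} [Field k] [CharZero k] (f g : FaaF k →ₐ[k] k) :
    compPS (serF f) (serF g) =
      (PowerSeries.mk fun n =>
        if h : 0 < n then convF g f (MvPolynomial.X ⟨n, h⟩) / n.factorial else 0) ∧
    (∀ (n : ℕ) (hn : 0 < n),
      (n.factorial : k) * PowerSeries.coeff n (compPS (serF f) (serF g)) =
        ∑ P : Finpartition (Finset.univ : Finset (Fin n)),
          (∏ b ∈ P.parts.attach,
            g (MvPolynomial.X (⟨b.1.card, partCardPos P b.2⟩ : ℕ+))) *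
          f (MvPolynomial.X (⟨P.parts.card, partsCardPos hn P⟩ : ℕ+))) := by
  classical
  have hG : PowerSeries.constantCoeff (serF g) = 0 := by
    rw [serF, ← PowerSeries.coeff_zero_eq_constantCoeff, PowerSeries.coeff_mk, dif_neg (lt_irrefl 0)]
  set a : ℕ → k := fun j => if h : 0 < j then f (MvPolynomial.X (⟨j, h⟩ : ℕ+)) else 0 with ha
  have hcoefF : ∀ j, PowerSeries.coeff j (serF f) = a j / (j.factorial : k) := by
    intro j
    simp only [serF, PowerSeries.coeff_mk, ha]
    by_cases h : 0 < j
    · rw [dif_pos h, dif_pos h]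
    · rw [dif_neg h, dif_neg h, zero_div]
  have hbW : ∀ (m : ℕ) (hm : 0 < m), bW (serF g) m = g (MvPolynomial.X (⟨m, hm⟩ : ℕ+)) := by
    intro m hm
    rw [bW, serF, PowerSeries.coeff_mk, dif_pos hm, mul_comm,
      div_mul_cancel₀ _ (Nat.cast_ne_zero.2 m.factorial_ne_zero)]
  have main : ∀ (n : ℕ) (hn : 0 < n),
      (n.factorial : k) * PowerSeries.coeff n (compPS (serF f) (serF g)) =
        ∑ P : Finpartition (Finset.univ : Finset (Fin n)),
          (∏ b ∈ P.parts.attach, g (MvPolynomial.X (⟨b.1.card, partCardPos P b.2⟩ : ℕ+))) *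
          f (MvPolynomial.X (⟨P.parts.card, partsCardPos hn P⟩ : ℕ+)) := by
    intro n hn
    have h1 : PowerSeries.coeff n (compPS (serF f) (serF g)) =
        ∑ j ∈ Finset.range (n + 1),
          a j / (j.factorial : k) * PowerSeries.coeff n ((serF g) ^ j) := by
      rw [compPS, PowerSeries.coeff_mk]
      exact Finset.sum_congr rfl fun j _ => by rw [hcoefF]
    rw [h1, ← Lsum, Lsum_eq_rW hG, rW, Rsum]
    refine Finset.sum_congr rfl fun P _ => ?_
    congr 1
    · rw [← Finset.prod_attach]
      exact Finset.prod_congr rfl fun b _ => hbW b.1.card (partCardPos P b.2)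
    · simp only [ha]
      rw [dif_pos (partsCardPos hn P)]
  refine ⟨?_, main⟩
  ext n
  rw [PowerSeries.coeff_mk]
  by_cases hn : 0 < n
  · rw [dif_pos hn]
    have hconv : convF g f (MvPolynomial.X (⟨n, hn⟩ : ℕ+)) =
        ∑ P : Finpartition (Finset.univ : Finset (Fin n)),
          (∏ b ∈ P.parts.attach, g (MvPolynomial.X (⟨b.1.card, partCardPos P b.2⟩ : ℕ+))) *
          f (MvPolynomial.X (⟨P.parts.card, partsCardPos hn P⟩ : ℕ+)) := by
      rw [convF]
      simp only [LinearMap.coe_comp, Function.comp_apply, AlgHom.toLinearMap_apply,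
        LinearEquiv.coe_coe]
      rw [show deltaF k (MvPolynomial.X (⟨n, hn⟩ : ℕ+)) = _ from MvPolynomial.aeval_X _ _, map_sum, map_sum]
      refine Finset.sum_congr rfl fun P _ => ?_
      rw [TensorProduct.map_tmul, TensorProduct.lid_tmul, AlgHom.toLinearMap_apply,
        AlgHom.toLinearMap_apply, smul_eq_mul, map_prod]
      rfl
    rw [hconv, ← main n hn, mul_comm, mul_div_assoc,
      div_self (Nat.cast_ne_zero.2 n.factorial_ne_zero), mul_one]
  · rw [dif_neg hn]
    have hn0 : n = 0 := by omega
    subst hn0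
    rw [compPS, PowerSeries.coeff_mk]
    simp [hcoefF 0, ha]
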